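/- For the classical Hurwitz zeta function: if Re(s) > 1 and 0 ≤ x < 1, then ζ(s, 1-x) = ∑_{j=0}^∞ ((s)_j / j!) ζ(s+j) x^j, where (s)_j = s(s+1)⋯(s+j-1) is the Pochhammer symbol, ζ(s,a) = ∑_{n=0}^∞ (n+a)^{-s}, and ζ(s) is the Riemann zeta function. Equivalently, ∑_{n=1}^∞ (n - x)^{-s} = ∑_{j=0}^∞ C(-s,j)(-x)^j ∑_{n=1}^∞ n^{-s-j}. -/

import Mathlib

open Complex Filter Topology

/-- Generalized binomial coefficient `C(a, j) = a(a-1)⋯(a-j+1)/j!` for complex `a`. -/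
noncomputable def cbinom (a : ℂ) (j : ℕ) : ℂ :=
  (∏ i ∈ Finset.range j, (a - i)) / (j.factorial : ℂ)

lemma one_add_re_pos {z : ℂ} (hz : ‖z‖ < 1) : 0 < (1 + z).re := by
  have h := (abs_le.mp (Complex.abs_re_le_norm z)).1
  simp only [Complex.add_re, Complex.one_re]
  linarith

lemma iteratedDeriv_one_add_cpow (a : ℂ) (n : ℕ) :
    ∀ z ∈ Metric.ball (0:ℂ) 1,
      iteratedDeriv n (fun w => (1 + w) ^ a) z
        = (∏ i ∈ Finset.range n, (a - i)) * (1 + z) ^ (a - n) := by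
  induction n with
  | zero => intro z hz; simp
  | succ n ih =>
    intro z hz
    have hzn : ‖z‖ < 1 := by simpa using hz
    have hre : 0 < (1 + z).re := one_add_re_pos hzn
    rw [iteratedDeriv_succ]
    have hev : iteratedDeriv n (fun w => (1 + w) ^ a) =ᶠ[𝓝 z]
        (fun w => (∏ i ∈ Finset.range n, (a - i)) * (1 + w) ^ (a - n)) := by
      filter_upwards [Metric.isOpen_ball.mem_nhds hz] with w hw using ih w hw
    rw [hev.deriv_eq]
    have hd : HasDerivAt (fun w : ℂ => (1 + w) ^ (a - n))
        ((a - n) * (1 + z) ^ (a - n - 1) * 1) z :=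
      HasDerivAt.cpow_const ((hasDerivAt_id z).const_add 1) (Or.inl hre)
    rw [((hd.const_mul (∏ i ∈ Finset.range n, (a - i))).deriv)]
    rw [Finset.prod_range_succ]
    push_cast
    rw [sub_sub]
    ring

lemma hasSum_binomial (a : ℂ) {z : ℂ} (hz : ‖z‖ < 1) :
    HasSum (fun j : ℕ => (∏ i ∈ Finset.range j, (a - i)) / (j.factorial : ℂ) * z ^ j)
      ((1 + z) ^ a) := by
  have hdiff : DifferentiableOn ℂ (fun w : ℂ => (1 + w) ^ a) (Metric.ball (0:ℂ) 1) := by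
    intro w hw
    have hre : 0 < (1 + w).re := one_add_re_pos (by simpa using hw)
    exact (HasDerivAt.cpow_const ((hasDerivAt_id w).const_add 1)
      (Or.inl hre)).differentiableAt.differentiableWithinAt
  have hzball : z ∈ Metric.ball (0:ℂ) 1 := by simpa using hz
  have H := Complex.hasSum_taylorSeries_on_ball hdiff hzball
  simp only [sub_zero, smul_eq_mul] at H
  convert H using 1
  · rfl
  funext n
  rw [iteratedDeriv_one_add_cpow a n 0 (by simp), add_zero, Complex.one_cpow]
  ring

lemma cbinom_succ (a : ℂ) (j : ℕ) :
    cbinom a (j + 1) = cbinom a j * ((a - j) / ((j : ℂ) + 1)) := by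
  simp only [cbinom, Finset.prod_range_succ, Nat.factorial_succ, Nat.cast_mul]
  rw [div_mul_div_comm]
  push_cast
  ring

lemma cbinom_ne_zero {s : ℂ} (hs : 1 < s.re) (j : ℕ) : cbinom (-s) j ≠ 0 := by
  simp only [cbinom, div_ne_zero_iff]
  refine ⟨Finset.prod_ne_zero_iff.mpr fun i _ h => ?_, by exact_mod_cast j.factorial_ne_zero⟩
  have : (-s - (i:ℂ)).re = 0 := by rw [h]; simp
  simp only [Complex.sub_re, Complex.neg_re, Complex.natCast_re] at this
  have hi : (0:ℝ) ≤ (i:ℝ) := Nat.cast_nonneg i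
  linarith

lemma row_hasSum (s : ℂ) {x : ℝ} (hx0 : 0 ≤ x) (hx1 : x < 1) (n : ℕ) :
    HasSum (fun j : ℕ => cbinom (-s) j * (-(x : ℂ)) ^ j * ((n + 1 : ℕ) : ℂ) ^ (-(s + (j : ℂ))))
      ((((n + 1 : ℝ) - x : ℝ) : ℂ) ^ (-s)) := by
  set N : ℝ := (n : ℝ) + 1 with hN
  have hN0 : (0:ℝ) < N := by positivity
  have hN1 : (1:ℝ) ≤ N := by simp [hN]
  have hNne : ((N : ℝ) : ℂ) ≠ 0 := by exact_mod_cast hN0.ne'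
  set z : ℂ := ((-(x / N) : ℝ) : ℂ) with hzdef
  have hznorm : ‖z‖ < 1 := by
    have : ‖z‖ = x / N := by
      rw [hzdef, Complex.norm_real, Real.norm_eq_abs, abs_neg, abs_div,
        _root_.abs_of_nonneg hx0, _root_.abs_of_pos hN0]
    rw [this]
    exact (div_lt_one hN0).mpr (lt_of_lt_of_le hx1 hN1)
  have H := (hasSum_binomial (-s) hznorm).mul_right (((N : ℝ) : ℂ) ^ (-s))
  have hval : (1 + z) ^ (-s) * ((N : ℝ) : ℂ) ^ (-s) = ((((n : ℝ) + 1) - x : ℝ) : ℂ) ^ (-s) := by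
    have h1 : ((1 - x / N : ℝ) : ℂ) = 1 + z := by rw [hzdef]; push_cast; ring
    have hsub : (0:ℝ) ≤ 1 - x / N := by
      have : x / N ≤ x := div_le_self hx0 hN1
      linarith
    rw [← h1, ← Complex.mul_cpow_ofReal_nonneg hsub hN0.le, ← Complex.ofReal_mul,
      show ((1 - x / N) * N : ℝ) = (n : ℝ) + 1 - x by field_simp; rw [hN]]
  have hfun : ∀ j : ℕ, (∏ i ∈ Finset.range j, (-s - i)) / (j.factorial : ℂ) * z ^ j
        * ((N : ℝ) : ℂ) ^ (-s)
      = cbinom (-s) j * (-(x : ℂ)) ^ j * ((n + 1 : ℕ) : ℂ) ^ (-(s + (j : ℂ))) := by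
    intro j
    have hNN : ((n + 1 : ℕ) : ℂ) = ((N : ℝ) : ℂ) := by rw [hN]; push_cast; ring
    have hzx : z = -(x : ℂ) / ((N : ℝ) : ℂ) := by rw [hzdef]; push_cast; ring
    have hNj : ((N : ℝ) : ℂ) ^ (-(j : ℂ)) = (((N : ℝ) : ℂ) ^ j)⁻¹ := by
      rw [Complex.cpow_neg, Complex.cpow_natCast]
    rw [hNN, neg_add, Complex.cpow_add _ _ hNne, hNj, hzx, div_pow, cbinom]
    ring
  exact hval ▸ (H.congr_fun fun j => (hfun j).symm)

lemma summable_A {s : ℂ} (hs : 1 < s.re) {x : ℝ} (hx0 : 0 ≤ x) (hx1 : x < 1) :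
    Summable (fun j : ℕ => ‖cbinom (-s) j * (-(x : ℂ)) ^ j‖) := by
  rcases eq_or_lt_of_le hx0 with h0 | hxpos
  · apply summable_of_ne_finset_zero (s := ({0} : Finset ℕ))
    intro j hj
    simp only [Finset.mem_singleton] at hj
    simp [← h0, zero_pow hj]
  · set f : ℕ → ℂ := fun j => cbinom (-s) j * (-(x : ℂ)) ^ j with hf
    have hxne : (-(x : ℂ)) ≠ 0 := by
      simp only [neg_ne_zero, Ne, Complex.ofReal_eq_zero]
      exact hxpos.ne'
    have hfne : ∀ j, f j ≠ 0 := fun j =>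
      mul_ne_zero (cbinom_ne_zero hs j) (pow_ne_zero _ hxne)
    have hterm : ∀ j : ℕ, ‖f (j + 1)‖ / ‖f j‖ = ‖(-s - j) / ((j : ℂ) + 1)‖ * x := by
      intro j
      have : f (j + 1) = f j * ((-s - j) / ((j : ℂ) + 1)) * (-(x : ℂ)) := by
        simp only [hf, cbinom_succ, pow_succ]
        ring
      rw [this, norm_mul, norm_mul, norm_neg, Complex.norm_real, Real.norm_eq_abs,
        _root_.abs_of_nonneg hx0]
      rw [mul_assoc, mul_comm ‖f j‖, mul_div_assoc, div_self (norm_ne_zero_iff.mpr (hfne j)),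
        mul_one]
    have hinv : Tendsto (fun j : ℕ => (((j : ℂ)) + 1)⁻¹) atTop (𝓝 0) := by
      rw [tendsto_zero_iff_norm_tendsto_zero]
      have : ∀ j : ℕ, ‖(((j : ℂ)) + 1)⁻¹‖ = 1 / ((j : ℝ) + 1) := by
        intro j
        rw [norm_inv, one_div]
        congr 1
        rw [show ((j : ℂ) + 1) = (((j : ℝ) + 1 : ℝ) : ℂ) by push_cast; ring,
          Complex.norm_real, Real.norm_eq_abs, _root_.abs_of_pos (by positivity)]
      simpa only [this] using tendsto_one_div_add_atTop_nhds_zero_nat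
    have hquot : Tendsto (fun j : ℕ => (-s - j) / ((j : ℂ) + 1)) atTop (𝓝 (-1)) := by
      have heq : ∀ j : ℕ, (-s - j) / ((j : ℂ) + 1) = -1 + (1 - s) * ((j : ℂ) + 1)⁻¹ := by
        intro j
        have : ((j : ℂ) + 1) ≠ 0 := Nat.cast_add_one_ne_zero j
        field_simp
        ring
      have : Tendsto (fun j : ℕ => -1 + (1 - s) * ((j : ℂ) + 1)⁻¹) atTop (𝓝 (-1 + (1 - s) * 0)) :=
        tendsto_const_nhds.add (tendsto_const_nhds.mul hinv)
      simpa only [mul_zero, add_zero, ← heq] using this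
    have hratio : Tendsto (fun j : ℕ => ‖f (j + 1)‖ / ‖f j‖) atTop (𝓝 x) := by
      have h1 : Tendsto (fun j : ℕ => ‖(-s - j) / ((j : ℂ) + 1)‖ * x) atTop (𝓝 (‖(-1 : ℂ)‖ * x)) :=
        ((continuous_norm.tendsto _).comp hquot).mul_const x
      simp only [norm_neg, norm_one, one_mul] at h1
      exact h1.congr fun j => (hterm j).symm
    apply summable_of_ratio_test_tendsto_lt_one hx1
      (Eventually.of_forall fun j => norm_ne_zero_iff.mpr (hfne j))
    refine hratio.congr fun j => ?_
    rw [Real.norm_eq_abs, Real.norm_eq_abs, abs_norm, abs_norm]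

set_option maxHeartbeats 1000000 in
theorem ramanujan_hurwitz_riemann (s : ℂ) (hs : 1 < s.re)
    (x : ℝ) (hx0 : 0 ≤ x) (hx1 : x < 1) :
    (∑' n : ℕ, (((n : ℝ) + (1 - x) : ℝ) : ℂ) ^ (-s) =
      ∑' j : ℕ, ((∏ i ∈ Finset.range j, (s + i)) / (j.factorial : ℂ)) *
        riemannZeta (s + j) * (x : ℂ) ^ j) ∧
    (∑' n : ℕ, (((n + 1 : ℝ) - x : ℝ) : ℂ) ^ (-s) =
      ∑' j : ℕ, cbinom (-s) j * (-(x : ℂ)) ^ j *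
        ∑' n : ℕ, ((n + 1 : ℕ) : ℂ) ^ (-(s + (j : ℂ)))) := by
  have hA := summable_A hs hx0 hx1
  have hB : Summable (fun n : ℕ => ((n : ℝ) + 1) ^ (-s.re)) := by
    have h := (summable_nat_add_iff 1).mpr (Real.summable_one_div_nat_rpow.mpr hs)
    refine h.congr fun n => ?_
    rw [Real.rpow_neg (by positivity), one_div]
    norm_num
  set G : ℕ × ℕ → ℂ := fun p =>
    cbinom (-s) p.2 * (-(x : ℂ)) ^ p.2 * ((p.1 + 1 : ℕ) : ℂ) ^ (-(s + (p.2 : ℂ))) with hG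
  have hGsum : Summable G := by
    have hg : Summable (fun p : ℕ × ℕ =>
        ((p.1 : ℝ) + 1) ^ (-s.re) * ‖cbinom (-s) p.2 * (-(x : ℂ)) ^ p.2‖) :=
      hB.mul_of_nonneg hA (fun n => Real.rpow_nonneg (by positivity) _)
        (fun j => norm_nonneg _)
    apply Summable.of_norm_bounded hg
    rintro ⟨n, j⟩
    have hj0 : (0:ℝ) ≤ (j : ℝ) := Nat.cast_nonneg j
    have hn0 : (0:ℝ) ≤ (n : ℝ) := Nat.cast_nonneg n
    have hnorm : ‖((n + 1 : ℕ) : ℂ) ^ (-(s + (j : ℂ)))‖ = ((n : ℝ) + 1) ^ (-(s.re + j)) := by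
      rw [show ((n + 1 : ℕ) : ℂ) = ((((n : ℝ) + 1 : ℝ)) : ℂ) by push_cast; ring,
        Complex.norm_cpow_eq_rpow_re_of_pos (by positivity)]
      norm_num [Complex.add_re]
    simp only [hG]
    rw [norm_mul, hnorm, mul_comm]
    apply mul_le_mul_of_nonneg_right _ (norm_nonneg _)
    exact Real.rpow_le_rpow_of_exponent_le (by linarith) (by linarith)
  have hrow : ∀ n : ℕ, HasSum (fun j : ℕ => G (n, j)) ((((n + 1 : ℝ) - x : ℝ) : ℂ) ^ (-s)) :=
    fun n => row_hasSum s hx0 hx1 n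
  have key : (∑' n : ℕ, (((n + 1 : ℝ) - x : ℝ) : ℂ) ^ (-s))
      = ∑' j : ℕ, cbinom (-s) j * (-(x : ℂ)) ^ j *
          ∑' n : ℕ, ((n + 1 : ℕ) : ℂ) ^ (-(s + (j : ℂ))) := by
    have h1 : (∑' n : ℕ, (((n + 1 : ℝ) - x : ℝ) : ℂ) ^ (-s)) = ∑' (n : ℕ) (j : ℕ), G (n, j) :=
      tsum_congr fun n => (hrow n).tsum_eq.symm
    have hGsum' : Summable (Function.uncurry fun (n j : ℕ) => G (n, j)) := hGsum
    have h2 : (∑' (n : ℕ) (j : ℕ), G (n, j)) = ∑' (j : ℕ) (n : ℕ), G (n, j) :=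
      (Summable.tsum_comm' hGsum' hGsum'.prod_factor hGsum'.prod_symm.prod_factor).symm
    rw [h1, h2]
    refine tsum_congr fun j => ?_
    simp only [hG]
    exact tsum_mul_left
  refine ⟨?_, key⟩
  have hL : (∑' n : ℕ, (((n : ℝ) + (1 - x) : ℝ) : ℂ) ^ (-s))
      = ∑' n : ℕ, (((n + 1 : ℝ) - x : ℝ) : ℂ) ^ (-s) :=
    tsum_congr fun n => by rw [show ((n : ℝ) + (1 - x) : ℝ) = ((n + 1 : ℝ) - x : ℝ) by ring]
  rw [hL, key]
  refine tsum_congr fun j => ?_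
  have hj0 : (0:ℝ) ≤ (j : ℝ) := Nat.cast_nonneg j
  have hz : riemannZeta (s + j) = ∑' n : ℕ, ((n + 1 : ℕ) : ℂ) ^ (-(s + (j : ℂ))) := by
    rw [zeta_eq_tsum_one_div_nat_add_one_cpow
      (by simp only [Complex.add_re, Complex.natCast_re]; linarith)]
    refine tsum_congr fun n => ?_
    rw [Complex.cpow_neg, one_div]
    congr 2
    push_cast
    ring
  rw [hz]
  symm
  have hprod : (∏ i ∈ Finset.range j, (-s - (i:ℂ)))
      = (-1 : ℂ) ^ j * ∏ i ∈ Finset.range j, (s + i) := by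
    have hstep : (∏ i ∈ Finset.range j, (-s - (i:ℂ)))
        = ∏ i ∈ Finset.range j, (-1 : ℂ) * (s + (i:ℂ)) :=
      Finset.prod_congr rfl fun i _ => by ring
    rw [hstep, Finset.prod_mul_distrib, Finset.prod_const, Finset.card_range]
  have h11 : ((-1 : ℂ)) ^ j * (-1 : ℂ) ^ j = 1 := by
    rw [← mul_pow]
    norm_num
  calc ((∏ i ∈ Finset.range j, (s + i)) / (j.factorial : ℂ))
        * (∑' n : ℕ, ((n + 1 : ℕ) : ℂ) ^ (-(s + (j : ℂ)))) * (x : ℂ) ^ j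
      = (((-1 : ℂ)) ^ j * (-1 : ℂ) ^ j) * (((∏ i ∈ Finset.range j, (s + i)) / (j.factorial : ℂ))
        * (∑' n : ℕ, ((n + 1 : ℕ) : ℂ) ^ (-(s + (j : ℂ)))) * (x : ℂ) ^ j) := by
        rw [h11, one_mul]
    _ = cbinom (-s) j * (-(x : ℂ)) ^ j
        * ∑' n : ℕ, ((n + 1 : ℕ) : ℂ) ^ (-(s + (j : ℂ))) := by
        rw [cbinom, hprod, neg_pow]
        ring
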